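/- Let a, λ ∈ ℝⁿ with ‖a‖ = ‖λ‖ = 1, λ ≠ ±a, and d ∈ ℝᵐ with ‖d‖ ≤ 1. If y ∈ ℝᵐ satisfies λᵀa‖y‖ + dᵀy > 0, then the point x(y) = S(y)λ − (dᵀy + λᵀa·S(y))a, where S(y) = sqrt((‖y‖² − (dᵀy)²)/(1 − (λᵀa)²)), satisfies ‖x(y)‖ = ‖y‖, aᵀx(y) = −dᵀy, and λᵀx(y) = sqrt((‖y‖² − (dᵀy)²)(1 − (λᵀa)²)) − (dᵀy)(λᵀa). -/

import Mathlib

open RealInnerProductSpace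

theorem primal_solution_properties {n m : ℕ}
    (a lam : EuclideanSpace ℝ (Fin n)) (d : EuclideanSpace ℝ (Fin m))
    (ha : ‖a‖ = 1) (hlam : ‖lam‖ = 1)
    (hne : lam ≠ a) (hne' : lam ≠ -a) (hd : ‖d‖ ≤ 1)
    (y : EuclideanSpace ℝ (Fin m))
    (hy : 0 < ⟪lam, a⟫ * ‖y‖ + ⟪d, y⟫)
    (Sy : ℝ) (hSy : Sy = Real.sqrt ((‖y‖ ^ 2 - ⟪d, y⟫ ^ 2) / (1 - ⟪lam, a⟫ ^ 2)))
    (x : EuclideanSpace ℝ (Fin n))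
    (hx : x = Sy • lam - (⟪d, y⟫ + ⟪lam, a⟫ * Sy) • a) :
    ‖x‖ = ‖y‖ ∧ ⟪a, x⟫ = -⟪d, y⟫ ∧
    ⟪lam, x⟫ = Real.sqrt ((‖y‖ ^ 2 - ⟪d, y⟫ ^ 2) * (1 - ⟪lam, a⟫ ^ 2)) - ⟪d, y⟫ * ⟪lam, a⟫ := by
  set c : ℝ := ⟪lam, a⟫ with hc
  set t : ℝ := ⟪d, y⟫ with ht
  have hcabs : |c| ≤ 1 := by
    have := abs_real_inner_le_norm lam a
    simpa [ha, hlam, hc] using this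
  have hclt : c ^ 2 < 1 := by
    rcases lt_or_eq_of_le hcabs with h | h
    · nlinarith [abs_nonneg c, sq_abs c]
    · exfalso
      rcases (abs_eq (by norm_num : (0:ℝ) ≤ 1)).mp h with h1 | h1
      · apply hne
        have h0 : ‖lam - a‖ ^ 2 = 0 := by
          rw [norm_sub_sq_real, ha, hlam, ← hc, h1]; ring
        have := pow_eq_zero_iff (n := 2) (by norm_num) |>.mp h0
        exact sub_eq_zero.mp (by simpa using this)
      · apply hne'
        have h0 : ‖lam + a‖ ^ 2 = 0 := by
          rw [norm_add_sq_real, ha, hlam, ← hc, h1]; ring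
        have := pow_eq_zero_iff (n := 2) (by norm_num) |>.mp h0
        have := norm_eq_zero.mp (by simpa using this)
        exact add_eq_zero_iff_eq_neg.mp this
  have hcpos : 0 < 1 - c ^ 2 := by linarith
  have hty : t ^ 2 ≤ ‖y‖ ^ 2 := by
    have h1 : |t| ≤ ‖d‖ * ‖y‖ := abs_real_inner_le_norm d y
    have h2 : ‖d‖ * ‖y‖ ≤ 1 * ‖y‖ := by
      exact mul_le_mul_of_nonneg_right hd (norm_nonneg y)
    nlinarith [abs_nonneg t, sq_abs t, norm_nonneg y]
  have hSnn : 0 ≤ Sy := by rw [hSy]; exact Real.sqrt_nonneg _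
  have hS2 : Sy ^ 2 = (‖y‖ ^ 2 - t ^ 2) / (1 - c ^ 2) := by
    rw [hSy]
    exact Real.sq_sqrt (div_nonneg (by linarith) (le_of_lt hcpos))
  have hS2' : Sy ^ 2 * (1 - c ^ 2) = ‖y‖ ^ 2 - t ^ 2 := by
    rw [hS2]; field_simp
  have hal : ⟪a, lam⟫ = c := (real_inner_comm a lam).symm
  have haa : ⟪a, a⟫ = (1 : ℝ) := by
    rw [real_inner_self_eq_norm_sq, ha]; norm_num
  have hll : ⟪lam, lam⟫ = (1 : ℝ) := by
    rw [real_inner_self_eq_norm_sq, hlam]; norm_num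
  have hax : ⟪a, x⟫ = -t := by
    rw [hx, inner_sub_right, inner_smul_right, inner_smul_right, hal, haa]; ring
  have hlx : ⟪lam, x⟫ = Sy * (1 - c ^ 2) - t * c := by
    rw [hx, inner_sub_right, inner_smul_right, inner_smul_right, ← hc, hll]; ring
  refine ⟨?_, hax, ?_⟩
  · have hxx : ‖x‖ ^ 2 = ‖y‖ ^ 2 := by
      have : ⟪x, x⟫ = Sy ^ 2 * (1 - c ^ 2) + t ^ 2 := by
        rw [hx, inner_sub_left, inner_sub_right, inner_sub_right,
          real_inner_smul_left, real_inner_smul_left, real_inner_smul_left,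
          real_inner_smul_left, inner_smul_right, inner_smul_right,
          inner_smul_right, inner_smul_right, hal, haa, hll, ← hc]
        ring
      rw [← real_inner_self_eq_norm_sq, this, hS2']; ring
    have := sq_abs ‖x‖ ▸ hxx
    nlinarith [norm_nonneg x, norm_nonneg y]
  · have hsq : Real.sqrt ((‖y‖ ^ 2 - t ^ 2) * (1 - c ^ 2)) = Sy * (1 - c ^ 2) := by
      have heq : (‖y‖ ^ 2 - t ^ 2) * (1 - c ^ 2)
          = ((‖y‖ ^ 2 - t ^ 2) / (1 - c ^ 2)) * (1 - c ^ 2) ^ 2 := by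
        field_simp
      rw [heq, Real.sqrt_mul (div_nonneg (by linarith) (le_of_lt hcpos)),
        Real.sqrt_sq (le_of_lt hcpos), ← hSy]
    rw [hlx, hsq]
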